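/- Let H be a Hilbert space and P, Q two orthogonal projections on H with ‖P − Q‖ < 1 in operator norm. Then the Kato–Nagy operator W = (Id − (P − Q)²)^{-1/2} (P Q + (Id − P)(Id − Q)) is a well-defined unitary operator satisfying P = W Q W⁻¹. -/

import Mathlib

open scoped Pointwise

section Aux

/-- If `b` commutes with a selfadjoint `a`, it commutes with `cfc f a`. -/
lemma my_commute_cfc {A : Type*} [Ring A] [StarRing A] [Algebra ℝ A] [TopologicalSpace A]
    [IsTopologicalRing A] [T2Space A]
    [ContinuousFunctionalCalculus ℝ A (IsSelfAdjoint : A → Prop)]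
    {a b : A} (ha : IsSelfAdjoint a) (hb : Commute b a) (f : ℝ → ℝ) :
    Commute b (cfc f a) := by
  by_cases hf : ContinuousOn f (spectrum ℝ a)
  · rw [cfc_apply f a ha hf]
    have : CompactSpace (spectrum ℝ a) := ContinuousFunctionalCalculus.compactSpace_spectrum a
    generalize (⟨_, hf.restrict⟩ : C(spectrum ℝ a, ℝ)) = g
    induction g using ContinuousMap.induction_on_of_compact with
    | const r =>
        have h : (ContinuousMap.const (spectrum ℝ a) r)
            = algebraMap ℝ C(spectrum ℝ a, ℝ) r := rfl
        rw [h, AlgHomClass.commutes]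
        exact (Algebra.commutes r b).symm
    | id => rw [cfcHom_id ha]; exact hb
    | star_id =>
        have h : star ((ContinuousMap.id ℝ).restrict (spectrum ℝ a))
            = (ContinuousMap.id ℝ).restrict (spectrum ℝ a) := by
          ext x; simp
        rw [h, cfcHom_id ha]; exact hb
    | add f g hf hg => rw [map_add]; exact hf.add_right hg
    | mul f g hf hg => rw [map_mul]; exact hf.mul_right hg
    | frequently g hg =>
        have hc : IsClosed {x : A | Commute b x} :=
          isClosed_eq (continuous_const.mul continuous_id) (continuous_id.mul continuous_const)
        exact hc.mem_of_frequently_of_tendsto hg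
          ((cfcHom_continuous ha).tendsto g)
  · rw [cfc_apply_of_not_continuousOn a hf]; exact Commute.zero_right b

variable {A : Type*} [Ring A] {P Q : A}

lemma alg1 (hP : P*P = P) (hQ : Q*Q = Q) :
    (Q*P + (1-Q)*(1-P)) * (P*Q + (1-P)*(1-Q)) = 1 - (P-Q)^2 := by
  have hP' : ∀ X : A, P*(P*X) = P*X := fun X => by rw [← mul_assoc, hP]
  have hQ' : ∀ X : A, Q*(Q*X) = Q*X := fun X => by rw [← mul_assoc, hQ]
  noncomm_ring
  simp only [mul_assoc, hP, hQ, hP', hQ']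
  abel

lemma alg2 (hP : P*P = P) (hQ : Q*Q = Q) :
    (P*Q + (1-P)*(1-Q)) * (Q*P + (1-Q)*(1-P)) = 1 - (P-Q)^2 := by
  have hP' : ∀ X : A, P*(P*X) = P*X := fun X => by rw [← mul_assoc, hP]
  have hQ' : ∀ X : A, Q*(Q*X) = Q*X := fun X => by rw [← mul_assoc, hQ]
  noncomm_ring
  simp only [mul_assoc, hP, hQ, hP', hQ']
  abel

lemma alg3 (hP : P*P = P) (hQ : Q*Q = Q) :
    (P*Q + (1-P)*(1-Q)) * Q * (Q*P + (1-Q)*(1-P)) = (1 - (P-Q)^2) * P := by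
  have hP' : ∀ X : A, P*(P*X) = P*X := fun X => by rw [← mul_assoc, hP]
  have hQ' : ∀ X : A, Q*(Q*X) = Q*X := fun X => by rw [← mul_assoc, hQ]
  noncomm_ring
  simp only [mul_assoc, hP, hQ, hP', hQ']
  abel

lemma algP (hP : P*P = P) (hQ : Q*Q = Q) :
    Commute P (1 - (P-Q)^2) := by
  show P * (1 - (P-Q)^2) = (1 - (P-Q)^2) * P
  have hP' : ∀ X : A, P*(P*X) = P*X := fun X => by rw [← mul_assoc, hP]
  have hQ' : ∀ X : A, Q*(Q*X) = Q*X := fun X => by rw [← mul_assoc, hQ]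
  noncomm_ring
  simp only [mul_assoc, hP, hQ, hP', hQ']
  abel

lemma algQ (hP : P*P = P) (hQ : Q*Q = Q) :
    Commute Q (1 - (P-Q)^2) := by
  show Q * (1 - (P-Q)^2) = (1 - (P-Q)^2) * Q
  have hP' : ∀ X : A, P*(P*X) = P*X := fun X => by rw [← mul_assoc, hP]
  have hQ' : ∀ X : A, Q*(Q*X) = Q*X := fun X => by rw [← mul_assoc, hQ]
  noncomm_ring
  simp only [mul_assoc, hP, hQ, hP', hQ']
  abel

end Aux

theorem stmt_3 {H : Type*} [NormedAddCommGroup H] [InnerProductSpace ℂ H] [CompleteSpace H]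
    (P Q : H →L[ℂ] H)
    (hPi : IsIdempotentElem P) (hPsa : IsSelfAdjoint P)
    (hQi : IsIdempotentElem Q) (hQsa : IsSelfAdjoint Q)
    (hnorm : ‖P - Q‖ < 1) :
    (cfc (fun x : ℝ => (Real.sqrt x)⁻¹) (1 - (P - Q) ^ 2) * (P * Q + (1 - P) * (1 - Q))) ∈
        unitary (H →L[ℂ] H) ∧
      P = (cfc (fun x : ℝ => (Real.sqrt x)⁻¹) (1 - (P - Q) ^ 2) * (P * Q + (1 - P) * (1 - Q))) *
            Q *
          star (cfc (fun x : ℝ => (Real.sqrt x)⁻¹) (1 - (P - Q) ^ 2) *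
            (P * Q + (1 - P) * (1 - Q))) := by
  rcases subsingleton_or_nontrivial H with hH | hH
  · have hsub : Subsingleton (H →L[ℂ] H) := ⟨fun f g => by ext x; exact Subsingleton.elim _ _⟩
    refine ⟨?_, Subsingleton.elim _ _⟩
    rw [Unitary.mem_iff]
    exact ⟨Subsingleton.elim _ _, Subsingleton.elim _ _⟩
  set T : H →L[ℂ] H := 1 - (P - Q) ^ 2 with hT
  set U : H →L[ℂ] H := P * Q + (1 - P) * (1 - Q) with hU
  set f : ℝ → ℝ := fun x : ℝ => (Real.sqrt x)⁻¹ with hf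
  set R : H →L[ℂ] H := cfc f T with hR
  have hTsa : IsSelfAdjoint T := (IsSelfAdjoint.one (R := H →L[ℂ] H)).sub ((hPsa.sub hQsa).pow 2)
  -- spectrum of T is contained in (0, ∞)
  have hspec : spectrum ℝ T ⊆ Set.Ioi 0 := by
    intro x hx
    have hkey : spectrum ℝ T = ({(1:ℝ)} : Set ℝ) - spectrum ℝ ((P - Q) ^ 2) := by
      have h := spectrum.singleton_sub_eq ((P - Q) ^ 2) (1:ℝ)
      rw [map_one] at h
      rw [hT, ← h]
    rw [hkey] at hx
    obtain ⟨y, hy, rfl⟩ : ∃ y ∈ spectrum ℝ ((P - Q) ^ 2), 1 - y = x := by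
      rcases Set.mem_sub.mp hx with ⟨o, ho, y, hy, rfl⟩
      exact ⟨y, hy, by simp_all⟩
    have h2 : ‖y‖ ≤ ‖(P - Q) ^ 2‖ := spectrum.norm_le_norm_of_mem hy
    have h3 : ‖(P - Q) ^ 2‖ < 1 := by
      have := norm_mul_le (P - Q) (P - Q)
      have h0 := norm_nonneg (P - Q)
      calc ‖(P - Q) ^ 2‖ = ‖(P - Q) * (P - Q)‖ := by rw [sq]
        _ ≤ ‖P - Q‖ * ‖P - Q‖ := norm_mul_le _ _
        _ < 1 := by nlinarith
    have h4 : |y| < 1 := lt_of_le_of_lt (by simpa [Real.norm_eq_abs] using h2) h3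
    have h5 := abs_lt.mp h4
    simp only [Set.mem_Ioi]
    linarith [h5.2]
  have hcont : ContinuousOn f (spectrum ℝ T) :=
    ContinuousOn.inv₀ Real.continuous_sqrt.continuousOn
      (fun x hx => ne_of_gt (Real.sqrt_pos.2 (hspec hx)))
  have hRsa : IsSelfAdjoint R := cfc_predicate f T
  -- R * R * T = 1
  have hRRT : R * R * T = 1 := by
    have h1 : R * R = cfc (fun x : ℝ => f x * f x) T := (cfc_mul f f T hcont hcont).symm
    have h2 : R * R * T = cfc (fun x : ℝ => f x * f x * x) T := by
      rw [h1]
      nth_rewrite 2 [← cfc_id ℝ T hTsa]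
      exact (cfc_mul (fun x => f x * f x) id T (hcont.mul hcont) continuousOn_id).symm
    rw [h2]
    have h3 : (spectrum ℝ T).EqOn (fun x : ℝ => f x * f x * x) (fun _ => (1:ℝ)) := by
      intro x hx
      have hx' : 0 < x := hspec hx
      simp only [hf]
      rw [← mul_inv, Real.mul_self_sqrt hx'.le]
      exact inv_mul_cancel₀ (ne_of_gt hx')
    rw [cfc_congr h3, cfc_const_one ℝ T hTsa]
  have hTR : Commute T R := my_commute_cfc hTsa (Commute.refl T) f
  have hTRR : T * (R * R) = 1 := by
    have hc : Commute (R * R) T := hTR.symm.mul_left hTR.symm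
    have h := hRRT
    rwa [hc.eq] at h
  -- commutation of P, Q, U with T and R
  have hPT : Commute P T := algP hPi.eq hQi.eq
  have hQT : Commute Q T := algQ hPi.eq hQi.eq
  have hPR : Commute P R := my_commute_cfc hTsa hPT f
  have hQR : Commute Q R := my_commute_cfc hTsa hQT f
  have hUT : Commute U T := by
    have h1 : Commute (1 - P) T := (Commute.one_left T).sub_left hPT
    have h2 : Commute (1 - Q) T := (Commute.one_left T).sub_left hQT
    exact (hPT.mul_left hQT).add_left (h1.mul_left h2)
  have hUR : Commute U R := my_commute_cfc hTsa hUT f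
  have hURR : Commute (R * R) U := hUR.symm.mul_left hUR.symm
  have hUstar : star U = Q * P + (1 - Q) * (1 - P) := by
    simp [hU, star_sub, star_mul, hPsa.star_eq, hQsa.star_eq]
  have hU'U : star U * U = T := by rw [hUstar, hU, hT]; exact alg1 hPi.eq hQi.eq
  have hUU' : U * star U = T := by rw [hUstar, hU, hT]; exact alg2 hPi.eq hQi.eq
  have hUQU : U * Q * star U = T * P := by rw [hUstar, hU, hT]; exact alg3 hPi.eq hQi.eq
  constructor
  · rw [Unitary.mem_iff]
    constructor
    · rw [star_mul, hRsa.star_eq]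
      calc star U * R * (R * U) = star U * (R * R * U) := by noncomm_ring
        _ = star U * (U * (R * R)) := by rw [hURR.eq]
        _ = star U * U * (R * R) := by noncomm_ring
        _ = T * (R * R) := by rw [hU'U]
        _ = 1 := hTRR
    · rw [star_mul, hRsa.star_eq]
      calc R * U * (star U * R) = R * (U * star U) * R := by noncomm_ring
        _ = R * T * R := by rw [hUU']
        _ = T * R * R := by rw [hTR.symm.eq]
        _ = T * (R * R) := by noncomm_ring
        _ = 1 := hTRR
  · rw [star_mul, hRsa.star_eq]
    have hTPc : Commute (T * P) R := hTR.mul_left hPR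
    calc P = P * (T * (R * R)) := by rw [hTRR, mul_one]
      _ = P * T * (R * R) := by noncomm_ring
      _ = T * P * (R * R) := by rw [hPT.eq]
      _ = R * (T * P) * R := by rw [← hTPc.eq]; noncomm_ring
      _ = R * (U * Q * star U) * R := by rw [hUQU]
      _ = R * U * Q * (star U * R) := by noncomm_ring
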